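/- Let G(z) = Σ_{p=0}^d z^p A_p + Σ_{j=1}^k w_j(z) E_j be an n×n rational matrix polynomial and λ ∈ ℂ with all w_j(λ) defined. Fix x ∈ ℂⁿ \ {0}. Then the infimum of ‖(ΔA₀,…,ΔA_d,ΔE₁,…,ΔE_k)‖ over all tuples of n×n matrices with (Σ_p λ^p (A_p − ΔA_p) + Σ_j w_j(λ)(E_j − ΔE_j))x = 0 equals ‖G(λ)x‖ / (‖x‖ · ‖(1, λ, …, λ^d, w₁(λ), …, w_k(λ))‖), and this infimum is attained. -/

import Mathlib

set_option maxHeartbeats 1000000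
set_option synthInstance.maxHeartbeats 400000


/-- The spectral (operator 2-) norm of a complex matrix. -/
noncomputable def specNorm {n : ℕ} (A : Matrix (Fin n) (Fin n) ℂ) : ℝ :=
  ‖Matrix.toEuclideanCLM (𝕜 := ℂ) A‖

/-- The Euclidean norm of a complex vector. -/
noncomputable def evNorm {n : ℕ} (v : Fin n → ℂ) : ℝ :=
  ‖(WithLp.equiv 2 (Fin n → ℂ)).symm v‖

lemma evNorm_nonneg {n : ℕ} (v : Fin n → ℂ) : 0 ≤ evNorm v := norm_nonneg _

lemma specNorm_nonneg {n : ℕ} (A : Matrix (Fin n) (Fin n) ℂ) : 0 ≤ specNorm A := norm_nonneg _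

lemma evNorm_pos {n : ℕ} {v : Fin n → ℂ} (hv : v ≠ 0) : 0 < evNorm v := by
  rw [evNorm, norm_pos_iff]
  simpa using hv

lemma evNorm_smul {n : ℕ} (c : ℂ) (v : Fin n → ℂ) :
    evNorm (c • v) = ‖c‖ * evNorm v := by
  rw [evNorm, evNorm, WithLp.equiv_symm_apply, WithLp.toLp_smul, norm_smul]

lemma specNorm_smul {n : ℕ} (c : ℂ) (A : Matrix (Fin n) (Fin n) ℂ) :
    specNorm (c • A) = ‖c‖ * specNorm A := by
  rw [specNorm, specNorm, map_smul]
  rw [norm_smul c (Matrix.toEuclideanCLM (𝕜 := ℂ) A)]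

lemma evNorm_mulVec_le {n : ℕ} (A : Matrix (Fin n) (Fin n) ℂ) (x : Fin n → ℂ) :
    evNorm (A.mulVec x) ≤ specNorm A * evNorm x := by
  have h := (Matrix.toEuclideanCLM (𝕜 := ℂ) A).le_opNorm ((WithLp.equiv 2 (Fin n → ℂ)).symm x)
  rwa [WithLp.equiv_symm_apply, Matrix.toEuclideanCLM_toLp] at h

lemma vecMulVec_mulVec {n : ℕ} (u v y : Fin n → ℂ) :
    (Matrix.vecMulVec u v).mulVec y = (dotProduct v y) • u := by
  ext i
  simp [Matrix.vecMulVec_apply, Matrix.mulVec, dotProduct, Finset.mul_sum,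
    mul_comm, mul_left_comm]

lemma star_dot_self {n : ℕ} (x : Fin n → ℂ) :
    dotProduct (star x) x = (evNorm x ^ 2 : ℝ) := by
  rw [dotProduct_comm, ← EuclideanSpace.inner_toLp_toLp, inner_self_eq_norm_sq_to_K]
  push_cast
  rfl

lemma abs_star_dot_le {n : ℕ} (x y : Fin n → ℂ) :
    ‖dotProduct (star x) y‖ ≤ evNorm x * evNorm y := by
  rw [dotProduct_comm, ← EuclideanSpace.inner_toLp_toLp]
  exact norm_inner_le_norm (𝕜 := ℂ) _ _

lemma specNorm_vecMulVec {n : ℕ} (u x : Fin n → ℂ) (hx : x ≠ 0) :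
    specNorm (Matrix.vecMulVec u (star x)) = evNorm u * evNorm x := by
  set M := Matrix.vecMulVec u (star x)
  have hMv : ∀ y : Fin n → ℂ, M.mulVec y = (dotProduct (star x) y) • u :=
    fun y => vecMulVec_mulVec u (star x) y
  have hxpos := evNorm_pos hx
  apply le_antisymm
  · apply ContinuousLinearMap.opNorm_le_bound _ (mul_nonneg (evNorm_nonneg u) (evNorm_nonneg x))
    intro y
    set y' := WithLp.equiv 2 (Fin n → ℂ) y
    have hy : y = (WithLp.equiv 2 (Fin n → ℂ)).symm y' := rfl
    rw [hy, WithLp.equiv_symm_apply, Matrix.toEuclideanCLM_toLp]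
    have : evNorm (M.mulVec y') ≤ evNorm u * evNorm x * evNorm y' := by
      rw [hMv, evNorm_smul]
      calc ‖dotProduct (star x) y'‖ * evNorm u
          ≤ (evNorm x * evNorm y') * evNorm u :=
            mul_le_mul_of_nonneg_right (abs_star_dot_le x y') (evNorm_nonneg u)
        _ = evNorm u * evNorm x * evNorm y' := by ring
    exact this
  · have h := evNorm_mulVec_le M x
    rw [hMv, evNorm_smul, star_dot_self] at h
    have habs : ‖((evNorm x ^ 2 : ℝ) : ℂ)‖ = evNorm x ^ 2 := by
      rw [Complex.norm_real, Real.norm_eq_abs, abs_of_nonneg (by positivity)]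
    rw [habs] at h
    nlinarith [h, hxpos]

lemma sum_mulVec {n : ℕ} {ι : Type*} (s : Finset ι) (B : ι → Matrix (Fin n) (Fin n) ℂ)
    (x : Fin n → ℂ) :
    (∑ i ∈ s, B i).mulVec x = ∑ i ∈ s, (B i).mulVec x := by
  ext j
  simp only [Matrix.mulVec, dotProduct, Finset.sum_apply, Matrix.sum_apply,
    Finset.sum_mul]
  rw [Finset.sum_comm]

lemma evNorm_sum_le {n : ℕ} {ι : Type*} (s : Finset ι) (v : ι → (Fin n → ℂ)) :
    evNorm (∑ i ∈ s, v i) ≤ ∑ i ∈ s, evNorm (v i) := by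
  have : (WithLp.equiv 2 (Fin n → ℂ)).symm (∑ i ∈ s, v i)
      = ∑ i ∈ s, (WithLp.equiv 2 (Fin n → ℂ)).symm (v i) := by
    exact map_sum (WithLp.linearEquiv 2 ℂ (Fin n → ℂ)).symm v s
  rw [evNorm, this]
  exact norm_sum_le _ _

theorem backward_general {n : ℕ} {ι : Type*} [Fintype ι]
    (c : ι → ℂ) (M : ι → Matrix (Fin n) (Fin n) ℂ) (x : Fin n → ℂ) (hx : x ≠ 0)
    (hc : ∃ i, c i ≠ 0) :
    IsLeast {r : ℝ | ∃ Δ : ι → Matrix (Fin n) (Fin n) ℂ,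
        (∑ i, c i • (M i - Δ i)).mulVec x = 0 ∧
        r = Real.sqrt (∑ i, specNorm (Δ i) ^ 2)}
      (evNorm ((∑ i, c i • M i).mulVec x) /
        (evNorm x * Real.sqrt (∑ i, ‖c i‖ ^ 2))) := by
  obtain ⟨i₀, hi₀⟩ := hc
  set r := (∑ i, c i • M i).mulVec x with hr_def
  set nr := evNorm r
  set nx := evNorm x with hnx_def
  have hnx : 0 < nx := evNorm_pos hx
  set s2 := ∑ i, ‖c i‖ ^ 2 with hs2_def
  have hs2 : 0 < s2 := by
    apply Finset.sum_pos' (fun i _ => by positivity)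
    refine ⟨i₀, Finset.mem_univ _, ?_⟩
    have : 0 < ‖c i₀‖ := by simpa using hi₀
    positivity
  have hnr : 0 ≤ nr := evNorm_nonneg _
  have hs2c : ((s2 : ℂ)) ≠ 0 := by exact_mod_cast hs2.ne'
  have hnxc : (((nx ^ 2 : ℝ)) : ℂ) ≠ 0 := by
    have : (0:ℝ) < nx ^ 2 := by positivity
    exact_mod_cast this.ne'
  have hxdot : dotProduct (star x) x = ((nx ^ 2 : ℝ) : ℂ) := star_dot_self x
  constructor
  · -- membership
    refine ⟨fun i => (starRingEnd ℂ (c i) * ((s2 * nx ^ 2 : ℝ) : ℂ)⁻¹) •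
      Matrix.vecMulVec r (star x), ?_, ?_⟩
    · have h1 : ∀ i : ι, c i • ((starRingEnd ℂ (c i) * ((s2 * nx ^ 2 : ℝ) : ℂ)⁻¹) •
          Matrix.vecMulVec r (star x))
          = ((‖c i‖ ^ 2 : ℝ) : ℂ) • (((s2 * nx ^ 2 : ℝ) : ℂ)⁻¹ •
            Matrix.vecMulVec r (star x)) := by
        intro i
        rw [smul_smul, smul_smul, ← mul_assoc, Complex.mul_conj']
        congr 1
        push_cast
        ring
      have key : (∑ i, c i • ((starRingEnd ℂ (c i) * ((s2 * nx ^ 2 : ℝ) : ℂ)⁻¹) •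
          Matrix.vecMulVec r (star x)))
          = (((nx ^ 2 : ℝ) : ℂ))⁻¹ • Matrix.vecMulVec r (star x) := by
        rw [Finset.sum_congr rfl (fun i _ => h1 i), ← Finset.sum_smul, smul_smul]
        congr 1
        have hsum : (∑ i, ((‖c i‖ ^ 2 : ℝ) : ℂ)) = ((s2 : ℝ) : ℂ) := by
          rw [hs2_def]; push_cast; rfl
        rw [hsum]
        have hnxc' : ((nx : ℝ) : ℂ) ≠ 0 := by exact_mod_cast hnx.ne'
        push_cast
        field_simp
      rw [Finset.sum_congr rfl (fun i _ => smul_sub (c i) (M i) _),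
        Finset.sum_sub_distrib, Matrix.sub_mulVec, key, Matrix.smul_mulVec,
        vecMulVec_mulVec, hxdot, smul_smul, inv_mul_cancel₀ hnxc, one_smul, ← hr_def,
        sub_self]
    · have hspec : ∀ i : ι, specNorm ((starRingEnd ℂ (c i) * ((s2 * nx ^ 2 : ℝ) : ℂ)⁻¹) •
          Matrix.vecMulVec r (star x)) = ‖c i‖ * ((s2 * nx ^ 2)⁻¹ * (nr * nx)) := by
        intro i
        rw [specNorm_smul, specNorm_vecMulVec _ _ hx, norm_mul, Complex.norm_conj]
        have : ‖(((s2 * nx ^ 2 : ℝ) : ℂ)⁻¹)‖ = (s2 * nx ^ 2)⁻¹ := by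
          rw [norm_inv, Complex.norm_real, Real.norm_eq_abs, abs_of_pos (by positivity)]
        rw [this]
        ring
      rw [Finset.sum_congr rfl (fun i _ => by rw [hspec i])]
      have : (∑ i, (‖c i‖ * ((s2 * nx ^ 2)⁻¹ * (nr * nx))) ^ 2)
          = (nr / (nx * Real.sqrt s2)) ^ 2 := by
        simp only [mul_pow, ← Finset.sum_mul, ← hs2_def]
        rw [div_pow, mul_pow, Real.sq_sqrt hs2.le]
        field_simp
      rw [this, Real.sqrt_sq (by positivity)]
  · -- lower bound
    rintro rr ⟨Δ, hcond, rfl⟩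
    have hDx : r = ∑ i, c i • ((Δ i).mulVec x) := by
      have h0 : (∑ i, c i • M i).mulVec x - (∑ i, c i • Δ i).mulVec x = 0 := by
        rw [← Matrix.sub_mulVec, ← Finset.sum_sub_distrib]
        rw [Finset.sum_congr rfl (fun i _ => (smul_sub (c i) (M i) (Δ i)).symm)]
        exact hcond
      have h1 : r = (∑ i, c i • Δ i).mulVec x := by
        rw [hr_def]; linear_combination (norm := module) h0
      rw [h1, sum_mulVec]
      exact Finset.sum_congr rfl (fun i _ => Matrix.smul_mulVec (c i) (Δ i) x)
    have h1 : nr ≤ ∑ i, ‖c i‖ * specNorm (Δ i) * nx := by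
      calc nr = evNorm (∑ i, c i • ((Δ i).mulVec x)) := by rw [← hDx]
        _ ≤ ∑ i, evNorm (c i • ((Δ i).mulVec x)) := evNorm_sum_le _ _
        _ ≤ ∑ i, ‖c i‖ * specNorm (Δ i) * nx := by
            apply Finset.sum_le_sum
            intro i _
            rw [evNorm_smul, mul_assoc]
            exact mul_le_mul_of_nonneg_left (evNorm_mulVec_le _ _) (by positivity)
    have h2 : (∑ i, ‖c i‖ * specNorm (Δ i))
        ≤ Real.sqrt s2 * Real.sqrt (∑ i, specNorm (Δ i) ^ 2) := by
      rw [hs2_def]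
      exact Real.sum_mul_le_sqrt_mul_sqrt _ _ _
    rw [div_le_iff₀ (by positivity)]
    have h3 : (∑ i, ‖c i‖ * specNorm (Δ i) * nx)
        = (∑ i, ‖c i‖ * specNorm (Δ i)) * nx := by
      rw [Finset.sum_mul]
    nlinarith [Real.sqrt_nonneg (∑ i, specNorm (Δ i) ^ 2), Real.sqrt_nonneg s2]

open Matrix in
/-- Eigenpair backward error: for fixed `x ≠ 0`, the minimal tuple norm of perturbations
`(ΔA₀,…,ΔA_d,ΔE₁,…,ΔE_k)` making `x` a null vector of the perturbed evaluation at `λ`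
equals `‖G(λ)x‖/(‖x‖·‖(1,λ,…,λ^d,w₁(λ),…,w_k(λ))‖)`, and it is attained. -/
theorem eigenpair_backward_error {n d k : ℕ}
    (A : Fin (d + 1) → Matrix (Fin n) (Fin n) ℂ)
    (E : Fin k → Matrix (Fin n) (Fin n) ℂ)
    (lam : ℂ) (w : Fin k → ℂ) (x : Fin n → ℂ) (hx : x ≠ 0) :
    IsLeast {r : ℝ |
        ∃ (ΔA : Fin (d + 1) → Matrix (Fin n) (Fin n) ℂ)
          (ΔE : Fin k → Matrix (Fin n) (Fin n) ℂ),
          (∑ p : Fin (d + 1), lam ^ (p : ℕ) • (A p - ΔA p)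
              + ∑ j, w j • (E j - ΔE j)).mulVec x = 0 ∧
          r = Real.sqrt (∑ p : Fin (d + 1), specNorm (ΔA p) ^ 2
              + ∑ j, specNorm (ΔE j) ^ 2)}
      (evNorm ((∑ p : Fin (d + 1), lam ^ (p : ℕ) • A p + ∑ j, w j • E j).mulVec x) /
        (evNorm x *
          Real.sqrt (∑ p : Fin (d + 1), ‖lam ^ (p : ℕ)‖ ^ 2
            + ∑ j, ‖w j‖ ^ 2))) := by
  have h := backward_general (n := n) (ι := Fin (d + 1) ⊕ Fin k)
    (Sum.elim (fun p : Fin (d + 1) => lam ^ (p : ℕ)) w)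
    (Sum.elim A E) x hx ⟨Sum.inl 0, by simp⟩
  have hsumM : (∑ i : Fin (d + 1) ⊕ Fin k,
        Sum.elim (fun p : Fin (d + 1) => lam ^ (p : ℕ)) w i • Sum.elim A E i)
      = ∑ p : Fin (d + 1), lam ^ (p : ℕ) • A p + ∑ j, w j • E j := by
    rw [Fintype.sum_sum_type]
    simp only [Sum.elim_inl, Sum.elim_inr]
  have hsumc : (∑ i : Fin (d + 1) ⊕ Fin k,
        ‖Sum.elim (fun p : Fin (d + 1) => lam ^ (p : ℕ)) w i‖ ^ 2)
      = ∑ p : Fin (d + 1), ‖lam ^ (p : ℕ)‖ ^ 2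
        + ∑ j, ‖w j‖ ^ 2 := by
    rw [Fintype.sum_sum_type]
    simp only [Sum.elim_inl, Sum.elim_inr]
  rw [hsumM, hsumc] at h
  have hset : {r : ℝ |
        ∃ (ΔA : Fin (d + 1) → Matrix (Fin n) (Fin n) ℂ)
          (ΔE : Fin k → Matrix (Fin n) (Fin n) ℂ),
          (∑ p : Fin (d + 1), lam ^ (p : ℕ) • (A p - ΔA p)
              + ∑ j, w j • (E j - ΔE j)).mulVec x = 0 ∧
          r = Real.sqrt (∑ p : Fin (d + 1), specNorm (ΔA p) ^ 2
              + ∑ j, specNorm (ΔE j) ^ 2)}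
      = {r : ℝ | ∃ Δ : Fin (d + 1) ⊕ Fin k → Matrix (Fin n) (Fin n) ℂ,
          (∑ i, Sum.elim (fun p : Fin (d + 1) => lam ^ (p : ℕ)) w i
              • (Sum.elim A E i - Δ i)).mulVec x = 0 ∧
          r = Real.sqrt (∑ i, specNorm (Δ i) ^ 2)} := by
    ext rr
    constructor
    · rintro ⟨ΔA, ΔE, hcond, rfl⟩
      refine ⟨Sum.elim ΔA ΔE, ?_, ?_⟩
      · rw [Fintype.sum_sum_type]
        simpa only [Sum.elim_inl, Sum.elim_inr] using hcond
      · rw [Fintype.sum_sum_type]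
        simp only [Sum.elim_inl, Sum.elim_inr]
    · rintro ⟨Δ, hcond, rfl⟩
      refine ⟨fun p => Δ (Sum.inl p), fun j => Δ (Sum.inr j), ?_, ?_⟩
      · rw [Fintype.sum_sum_type] at hcond
        simpa only [Sum.elim_inl, Sum.elim_inr] using hcond
      · rw [Fintype.sum_sum_type]
  rw [hset]
  exact h
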